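/- There exist unit vectors x, y, u, v in ℂ² (hence in any complex Hilbert space of dimension ≥ 2) with ⟨x,y⟩, ⟨x,v⟩, ⟨u,v⟩ all nonzero, such that ⟨y,x⟩⟨u,y⟩⟨v,u⟩⟨x,v⟩ ≠ ⟨x,y⟩⟨y,u⟩⟨u,v⟩⟨v,x⟩. -/
import Mathlib


open scoped InnerProductSpace

open Complex in
private noncomputable def sAux : ℝ := (Real.sqrt 2)⁻¹

private noncomputable def vecAux (a b : ℂ) : EuclideanSpace ℂ (Fin 2) :=
  (WithLp.equiv 2 (Fin 2 → ℂ)).symm ![a, b]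

private lemma sAux_pos : (0:ℝ) < sAux := by rw [sAux]; positivity
private lemma sAux_ne : (sAux:ℂ) ≠ 0 := Complex.ofReal_ne_zero.2 sAux_pos.ne'
private lemma sAux_key : Real.sqrt 2 * Real.sqrt (sAux^2) = 1 := by
  rw [show sAux^2 = 2⁻¹ by simp [sAux, Real.sq_sqrt], Real.sqrt_inv]
  exact mul_inv_cancel₀ (by positivity)

/-- There are unit vectors `x, y, u, v` in `ℂ²` with `⟨x,y⟩, ⟨x,v⟩, ⟨u,v⟩ ≠ 0`
such that `⟨y,x⟩⟨u,y⟩⟨v,u⟩⟨x,v⟩ ≠ ⟨x,y⟩⟨y,u⟩⟨u,v⟩⟨v,x⟩`.  Here the inner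
product `⟨a,b⟩` of the paper is linear in the first variable, i.e. it is
Mathlib's `⟪b, a⟫_ℂ`. -/
theorem stmt4 :
    ∃ x y u v : EuclideanSpace ℂ (Fin 2),
      ‖x‖ = 1 ∧ ‖y‖ = 1 ∧ ‖u‖ = 1 ∧ ‖v‖ = 1 ∧
      ⟪y, x⟫_ℂ ≠ 0 ∧ ⟪v, x⟫_ℂ ≠ 0 ∧ ⟪v, u⟫_ℂ ≠ 0 ∧
      ⟪x, y⟫_ℂ * ⟪y, u⟫_ℂ * ⟪u, v⟫_ℂ * ⟪v, x⟫_ℂ ≠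
        ⟪y, x⟫_ℂ * ⟪u, y⟫_ℂ * ⟪v, u⟫_ℂ * ⟪x, v⟫_ℂ := by
  refine ⟨vecAux 1 0, vecAux sAux sAux, vecAux 0 1, vecAux sAux (sAux * Complex.I),
    ?_, ?_, ?_, ?_, ?_, ?_, ?_, ?_⟩
  · simp [vecAux, EuclideanSpace.norm_eq, Fin.sum_univ_two]
  · simp only [vecAux]
    simp [EuclideanSpace.norm_eq, Fin.sum_univ_two, ← two_mul]
    exact sAux_key
  · simp [vecAux, EuclideanSpace.norm_eq, Fin.sum_univ_two]
  · simp only [vecAux]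
    simp [EuclideanSpace.norm_eq, Fin.sum_univ_two, ← two_mul]
    exact sAux_key
  · simp [vecAux, PiLp.inner_apply, Fin.sum_univ_two]
    exact sAux_pos.ne'
  · simp [vecAux, PiLp.inner_apply, Fin.sum_univ_two]
    exact sAux_pos.ne'
  · simp [vecAux, PiLp.inner_apply, Fin.sum_univ_two, Complex.I_ne_zero]
    exact sAux_pos.ne'
  · simp only [vecAux, PiLp.inner_apply]
    simp [Fin.sum_univ_two]
    intro h
    have h2 : (2 : ℂ) * ((sAux:ℂ) * sAux * (sAux * Complex.I * sAux)) = 0 := by ring_nf; linear_combination h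
    simp [Complex.I_ne_zero] at h2
    exact sAux_pos.ne' h2
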